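/- Let T : X → Y be bounded injective between Hilbert spaces, Tx† = y†, k ≥ 1 an integer, and x_{α,k} the k-fold iterated Tikhonov regularization (x_{α,0}=x₀, each x_{α,j} minimizes ‖y†-Tx‖² + α‖x - x_{α,j-1}‖²), so that x† - x_{α,k} = (α(T*T+αI)^{-1})^k (x†-x₀). Then for real 0 ≤ ν ≤ k: N_{ν/k}^{1-2k} ‖x†-x₀‖_{ν:k} ≤ sup_{α>0} α^{-ν}‖x† - x_{α,k}‖ ≤ ‖x†-x₀‖_{ν:k}. -/

import Mathlib

open MeasureTheory Set Filter

lemma aux_convex (n : ℕ) (a b β : ℝ) (ha : 0 ≤ a) (hb : 0 ≤ b) (hβ0 : 0 < β) (hβ1 : β < 1) :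
    (a + b) ^ n ≤ β * (a / β) ^ n + (1 - β) * (b / (1 - β)) ^ n := by
  have h1β : (0:ℝ) < 1 - β := by linarith
  have h := (convexOn_pow (𝕜 := ℝ) n).2 (mem_Ici.mpr (div_nonneg ha hβ0.le))
    (mem_Ici.mpr (div_nonneg hb h1β.le)) hβ0.le h1β.le (by ring)
  have e1 : β * (a / β) = a := by field_simp
  have e2 : (1 - β) * (b / (1 - β)) = b := by field_simp
  simpa [smul_eq_mul, e1, e2] using h

lemma aux_logeq {A B : ℝ} (hA : 0 < A) (hB : 0 < B) (h : Real.log A = Real.log B) : A = B := by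
  rw [← Real.exp_log hA, ← Real.exp_log hB, h]

lemma aux_key (k : ℕ) (hk : 1 ≤ k) (ν t l θ c α : ℝ)
    (hθ : ν = θ * k) (hc : c = ((1-θ)/θ) ^ ((2*(k:ℝ)-1)/(2*(k:ℝ))))
    (hα : α = c * t ^ ((k:ℝ))⁻¹)
    (hθ0 : 0 < θ) (hθ1 : θ < 1) (ht : 0 < t) (hl : 0 ≤ l) :
    (θ ^ θ * (1-θ) ^ (1-θ)) ^ (2*(k:ℝ) - 1) *
      (t ^ (-(2*ν/(k:ℝ))) * (t ^ 2 / (t ^ 2 + l ^ (2*(k:ℝ)))))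
      ≤ α ^ (-(2*ν)) * (α / (α + l)) ^ (2*(k:ℝ)) := by
  have hk0 : (0:ℝ) < k := by exact_mod_cast Nat.pos_of_ne_zero (by omega)
  have h1θ : (0:ℝ) < 1 - θ := by linarith
  have hr : 0 < (1-θ)/θ := div_pos h1θ hθ0
  have hc0 : 0 < c := hc ▸ Real.rpow_pos_of_pos hr _
  have htk : 0 < t ^ ((k:ℝ))⁻¹ := Real.rpow_pos_of_pos ht _
  have hα0 : 0 < α := hα ▸ mul_pos hc0 htk
  have hd0 : 0 < θ ^ θ * (1-θ) ^ (1-θ) :=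
    mul_pos (Real.rpow_pos_of_pos hθ0 _) (Real.rpow_pos_of_pos h1θ _)
  have hlogα : Real.log α
      = ((2*(k:ℝ)-1)/(2*(k:ℝ))) * (Real.log (1-θ) - Real.log θ) + ((k:ℝ))⁻¹ * Real.log t := by
    rw [hα, Real.log_mul hc0.ne' htk.ne', hc, Real.log_rpow hr,
      Real.log_div h1θ.ne' hθ0.ne', Real.log_rpow ht]
  have hcast : (2*(k:ℝ)) = ((2*k : ℕ) : ℝ) := by push_cast; ring
  rw [hcast, Real.rpow_natCast, Real.rpow_natCast]
  set n := 2*k with hn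
  have hn1 : 1 ≤ n := by omega
  have hln : 0 ≤ l ^ n := pow_nonneg hl n
  have ht2 : (0:ℝ) < t^2 := by positivity
  have hden1 : (0:ℝ) < t^2 + l^n := by positivity
  have hαl : 0 < α + l := by linarith
  have hden2 : (0:ℝ) < (α+l)^n := by positivity
  set D := (θ ^ θ * (1-θ) ^ (1-θ)) ^ (((n:ℕ):ℝ) - 1) with hD
  set E := t ^ (-(2*ν/(k:ℝ))) with hE
  set P := α ^ (-(2*ν)) with hP
  have hD0 : 0 < D := Real.rpow_pos_of_pos hd0 _
  have hE0 : 0 < E := Real.rpow_pos_of_pos ht _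
  have hP0 : 0 < P := Real.rpow_pos_of_pos hα0 _
  rw [div_pow,
    show D * (E * (t^2/(t^2+l^n))) = (D*E*t^2)/(t^2+l^n) by ring,
    show P * (α^n/(α+l)^n) = (P*α^n)/((α+l)^n) by ring,
    div_le_div_iff₀ hden1 hden2]
  have hconv := aux_convex n α l (1-θ) hα0.le hl h1θ (by linarith)
  have hconv' : (α+l)^n ≤ (1-θ)*(α/(1-θ))^n + θ*(l/θ)^n := by
    have e : (1 - (1-θ)) = θ := by ring
    simpa [e] using hconv
  have hI : D * E * (1-θ) / (1-θ)^n = P := by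
    apply aux_logeq (by positivity) hP0
    rw [Real.log_div (by positivity) (pow_ne_zero _ h1θ.ne'),
      Real.log_mul (mul_pos hD0 hE0).ne' h1θ.ne',
      Real.log_mul hD0.ne' hE0.ne', hD, hE, hP,
      Real.log_rpow hd0, Real.log_mul (Real.rpow_pos_of_pos hθ0 _).ne'
        (Real.rpow_pos_of_pos h1θ _).ne',
      Real.log_rpow hθ0, Real.log_rpow h1θ, Real.log_rpow ht]
    simp only [Real.log_pow]
    rw [Real.log_rpow hα0, hlogα, hθ, hn]
    push_cast
    field_simp
    ring
  have hII : D * E * t^2 * θ / θ^n = P * α^n := by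
    apply aux_logeq (by positivity) (by positivity)
    rw [Real.log_div (by positivity) (pow_ne_zero _ hθ0.ne'),
      Real.log_mul (by positivity) hθ0.ne',
      Real.log_mul (mul_pos hD0 hE0).ne' ht2.ne',
      Real.log_mul hD0.ne' hE0.ne', hD, hE, hP,
      Real.log_mul hP0.ne' (pow_pos hα0 n).ne',
      Real.log_rpow hd0, Real.log_mul (Real.rpow_pos_of_pos hθ0 _).ne'
        (Real.rpow_pos_of_pos h1θ _).ne',
      Real.log_rpow hθ0, Real.log_rpow h1θ, Real.log_rpow ht]
    simp only [Real.log_pow]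
    rw [Real.log_rpow hα0, hlogα, hθ, hn]
    push_cast
    field_simp
    ring
  calc D*E*t^2*(α+l)^n ≤ D*E*t^2*((1-θ)*(α/(1-θ))^n + θ*(l/θ)^n) := by
        apply mul_le_mul_of_nonneg_left hconv' (by positivity)
    _ = (D*E*(1-θ)/(1-θ)^n) * (t^2 * α^n) + (D*E*t^2*θ/θ^n) * l^n := by
        rw [div_pow, div_pow]; field_simp
    _ = P * (t^2 * α^n) + (P*α^n)*l^n := by rw [hI, hII]
    _ = P*α^n*(t^2+l^n) := by ring

theorem stmt16 {X Y : Type*}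
    [NormedAddCommGroup X] [InnerProductSpace ℝ X] [CompleteSpace X]
    [NormedAddCommGroup Y] [InnerProductSpace ℝ Y] [CompleteSpace Y]
    (T : X →L[ℝ] Y) (hT : Function.Injective T)
    (xdag x0 : X) (ydag : Y) (hy : T xdag = ydag)
    (k : ℕ) (hk : 1 ≤ k) (xαk : ℝ → X)
    (μ : Measure ℝ) [IsFiniteMeasure μ] (hsupp : μ (Iio 0) = 0)
    (hrep : ∀ α : ℝ, 0 < α →
      ENNReal.ofReal (‖xdag - xαk α‖ ^ 2)
        = ∫⁻ l, ENNReal.ofReal ((α/(α+l)) ^ (2*(k:ℝ))) ∂μ)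
    (ν : ℝ) (h0 : 0 ≤ ν) (h1 : ν ≤ (k:ℝ)) :
    ENNReal.ofReal
        (((ν/(k:ℝ)) ^ (ν/(k:ℝ)) * (1 - ν/(k:ℝ)) ^ (1 - ν/(k:ℝ))) ^ (2*(k:ℝ) - 1)) *
      (⨆ t ∈ Ioi (0:ℝ), ENNReal.ofReal (t ^ (-(2*ν/(k:ℝ)))) *
        ∫⁻ l, ENNReal.ofReal (t ^ 2 / (t ^ 2 + l ^ (2*(k:ℝ)))) ∂μ)
      ≤ (⨆ α ∈ Ioi (0:ℝ), ENNReal.ofReal (α ^ (-(2*ν)) * ‖xdag - xαk α‖ ^ 2)) ∧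
    (⨆ α ∈ Ioi (0:ℝ), ENNReal.ofReal (α ^ (-(2*ν)) * ‖xdag - xαk α‖ ^ 2))
      ≤ ⨆ t ∈ Ioi (0:ℝ), ENNReal.ofReal (t ^ (-(2*ν/(k:ℝ)))) *
          ∫⁻ l, ENNReal.ofReal (t ^ 2 / (t ^ 2 + l ^ (2*(k:ℝ)))) ∂μ := by
  have hk0 : (0:ℝ) < k := by exact_mod_cast Nat.pos_of_ne_zero (by omega)
  have hae : ∀ᵐ l ∂μ, 0 ≤ l := by
    rw [ae_iff]
    simp only [not_le]
    exact hsupp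
  have hcast : (2*(k:ℝ)) = ((2*k : ℕ) : ℝ) := by push_cast; ring
  constructor
  · -- lower bound
    simp_rw [ENNReal.mul_iSup]
    refine iSup₂_le fun t ht => ?_
    rw [mem_Ioi] at ht
    rcases eq_or_lt_of_le h0 with hν0 | hν0
    · -- case ν = 0
      subst hν0
      simp only [zero_div, mul_zero, neg_zero, sub_zero, Real.rpow_zero, Real.one_rpow,
        one_mul, mul_one, ENNReal.ofReal_one]
      have hmeas : ∀ n : ℕ, AEMeasurable
          (fun l : ℝ => ENNReal.ofReal ((((n:ℝ)+1)/(((n:ℝ)+1)+l)) ^ (2*(k:ℝ)))) μ := by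
        intro n; exact (by fun_prop : Measurable _).aemeasurable
      have hmono : ∀ᵐ l ∂μ, Monotone
          (fun n : ℕ => ENNReal.ofReal ((((n:ℝ)+1)/(((n:ℝ)+1)+l)) ^ (2*(k:ℝ)))) := by
        filter_upwards [hae] with l hl
        intro m n hmn
        apply ENNReal.ofReal_le_ofReal
        have hmc : ((m:ℝ)) ≤ (n:ℝ) := by exact_mod_cast hmn
        apply Real.rpow_le_rpow (by positivity) ?_ (by positivity)
        rw [div_le_div_iff₀ (by positivity) (by positivity)]
        nlinarith
      calc ∫⁻ l, ENNReal.ofReal (t ^ 2 / (t ^ 2 + l ^ (2*(k:ℝ)))) ∂μ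
          ≤ ∫⁻ l, ⨆ n : ℕ, ENNReal.ofReal ((((n:ℝ)+1)/(((n:ℝ)+1)+l)) ^ (2*(k:ℝ))) ∂μ := by
            refine lintegral_mono_ae ?_
            filter_upwards [hae] with l hl
            rcases eq_or_lt_of_le hl with hl0 | hl0
            · refine le_trans ?_ (le_iSup _ 0)
              rw [← hl0]
              have h2k : (2*(k:ℝ)) ≠ 0 := by positivity
              simp [Real.zero_rpow h2k, Real.one_rpow, div_self (by positivity : (t:ℝ)^2 ≠ 0)]
            · have hq : t^2/(t^2 + l ^ (2*(k:ℝ))) < 1 := by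
                rw [div_lt_one (by positivity)]
                have := Real.rpow_pos_of_pos hl0 (2*(k:ℝ))
                linarith
              have h1 : Tendsto (fun n : ℕ => ((n:ℝ)+1)+l) atTop atTop :=
                tendsto_atTop_add_const_right _ _
                  (tendsto_atTop_add_const_right _ _ tendsto_natCast_atTop_atTop)
              have h2 : Tendsto (fun n : ℕ => l/(((n:ℝ)+1)+l)) atTop (nhds 0) :=
                Filter.Tendsto.div_atTop tendsto_const_nhds h1
              have e : ∀ n:ℕ, ((n:ℝ)+1)/(((n:ℝ)+1)+l) = 1 - l/(((n:ℝ)+1)+l) := by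
                intro n
                have hne : ((n:ℝ)+1)+l ≠ 0 := by positivity
                field_simp
                ring
              have h3 : Tendsto (fun n : ℕ => (((n:ℝ)+1)/(((n:ℝ)+1)+l))) atTop (nhds 1) := by
                simp_rw [e]
                simpa using tendsto_const_nhds.sub h2
              have htend : Tendsto
                  (fun n : ℕ => (((n:ℝ)+1)/(((n:ℝ)+1)+l)) ^ (2*(k:ℝ))) atTop (nhds 1) := by
                simpa [Real.one_rpow] using h3.rpow_const (Or.inr (by positivity))
              obtain ⟨n, hn⟩ := (htend.eventually_const_lt hq).exists
              exact le_trans (ENNReal.ofReal_le_ofReal hn.le)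
                (le_iSup (fun m : ℕ =>
                  ENNReal.ofReal ((((m:ℝ)+1)/(((m:ℝ)+1)+l)) ^ (2*(k:ℝ)))) n)
        _ = ⨆ n : ℕ, ∫⁻ l, ENNReal.ofReal ((((n:ℝ)+1)/(((n:ℝ)+1)+l)) ^ (2*(k:ℝ))) ∂μ :=
            lintegral_iSup' hmeas hmono
        _ ≤ ⨆ α ∈ Ioi (0:ℝ), ENNReal.ofReal (‖xdag - xαk α‖ ^ 2) := by
            refine iSup_le fun n => ?_
            refine le_iSup₂_of_le ((n:ℝ)+1) (mem_Ioi.mpr (by positivity)) ?_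
            exact (hrep ((n:ℝ)+1) (by positivity)).ge
    · rcases lt_or_eq_of_le h1 with hνk | hνk
      · -- main case 0 < ν < k
        set θ := ν/(k:ℝ) with hθdef
        have hθ0 : 0 < θ := div_pos hν0 hk0
        have hθ1 : θ < 1 := (div_lt_one hk0).mpr hνk
        set c := ((1-θ)/θ) ^ ((2*(k:ℝ)-1)/(2*(k:ℝ))) with hcdef
        set α₀ := c * t ^ ((k:ℝ))⁻¹ with hα₀def
        have hc0 : 0 < c := Real.rpow_pos_of_pos (div_pos (by linarith) hθ0) _
        have hα0 : 0 < α₀ := mul_pos hc0 (Real.rpow_pos_of_pos ht _)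
        have hνθ : ν = θ * k := by rw [hθdef]; field_simp
        have hdd : (0:ℝ) ≤ (θ^θ * (1-θ)^(1-θ)) ^ (2*(k:ℝ)-1) :=
          Real.rpow_nonneg (mul_nonneg (Real.rpow_nonneg hθ0.le _)
            (Real.rpow_nonneg (by linarith) _)) _
        have hte : (0:ℝ) ≤ t ^ (-(2*ν/(k:ℝ))) := Real.rpow_nonneg ht.le _
        calc ENNReal.ofReal ((θ^θ * (1-θ)^(1-θ)) ^ (2*(k:ℝ)-1)) *
              (ENNReal.ofReal (t ^ (-(2*ν/(k:ℝ)))) *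
                ∫⁻ l, ENNReal.ofReal (t ^ 2 / (t ^ 2 + l ^ (2*(k:ℝ)))) ∂μ)
            = ∫⁻ l, ENNReal.ofReal ((θ^θ * (1-θ)^(1-θ)) ^ (2*(k:ℝ)-1) *
                (t ^ (-(2*ν/(k:ℝ))) * (t ^ 2 / (t ^ 2 + l ^ (2*(k:ℝ)))))) ∂μ := by
              rw [← lintegral_const_mul' _ _ ENNReal.ofReal_ne_top,
                ← lintegral_const_mul' _ _ ENNReal.ofReal_ne_top]
              refine lintegral_congr fun l => ?_
              rw [ENNReal.ofReal_mul hdd, ENNReal.ofReal_mul hte]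
          _ ≤ ∫⁻ l, ENNReal.ofReal (α₀ ^ (-(2*ν)) * (α₀/(α₀+l)) ^ (2*(k:ℝ))) ∂μ := by
              refine lintegral_mono_ae ?_
              filter_upwards [hae] with l hl
              exact ENNReal.ofReal_le_ofReal
                (aux_key k hk ν t l θ c α₀ hνθ hcdef hα₀def hθ0 hθ1 ht hl)
          _ = ENNReal.ofReal (α₀ ^ (-(2*ν)) * ‖xdag - xαk α₀‖ ^ 2) := by
              rw [ENNReal.ofReal_mul (Real.rpow_nonneg hα0.le _), hrep α₀ hα0,
                ← lintegral_const_mul' _ _ ENNReal.ofReal_ne_top]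
              exact lintegral_congr fun l =>
                ENNReal.ofReal_mul (Real.rpow_nonneg hα0.le _)
          _ ≤ ⨆ α ∈ Ioi (0:ℝ), ENNReal.ofReal (α ^ (-(2*ν)) * ‖xdag - xαk α‖ ^ 2) :=
              le_iSup₂_of_le α₀ (mem_Ioi.mpr hα0) le_rfl
      · -- case ν = k
        subst hνk
        simp only [div_self hk0.ne', sub_self, Real.one_rpow, Real.rpow_zero, one_mul,
          mul_one, ENNReal.ofReal_one]
        rw [show -(2*(k:ℝ)/(k:ℝ)) = (-2:ℝ) by field_simp]
        have hident : ∀ a l : ℝ, 0 < a → 0 ≤ l →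
            a ^ (-(2*(k:ℝ))) * (a/(a+l)) ^ (2*(k:ℝ)) = (((a+l))^(2*k:ℕ))⁻¹ := by
          intro a l ha hl
          have hal : (0:ℝ) < a + l := by linarith
          rw [hcast, Real.rpow_natCast (a/(a+l)) (2*k), div_pow, Real.rpow_neg ha.le,
            Real.rpow_natCast a (2*k), ← mul_div_assoc,
            inv_mul_cancel₀ (pow_ne_zero _ ha.ne'), one_div]
        have hmeas : ∀ n : ℕ, AEMeasurable (fun l : ℝ => ENNReal.ofReal
            ((((n:ℝ)+1)⁻¹ ^ (-(2*(k:ℝ)))) * ((((n:ℝ)+1)⁻¹/(((n:ℝ)+1)⁻¹+l)) ^ (2*(k:ℝ))))) μ := by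
          intro n; exact (by fun_prop : Measurable _).aemeasurable
        have hmono : ∀ᵐ l ∂μ, Monotone (fun n : ℕ => ENNReal.ofReal
            ((((n:ℝ)+1)⁻¹ ^ (-(2*(k:ℝ)))) * ((((n:ℝ)+1)⁻¹/(((n:ℝ)+1)⁻¹+l)) ^ (2*(k:ℝ))))) := by
          filter_upwards [hae] with l hl
          intro m n hmn
          have hm0 : (0:ℝ) < ((m:ℝ)+1)⁻¹ := by positivity
          have hn0 : (0:ℝ) < ((n:ℝ)+1)⁻¹ := by positivity
          apply ENNReal.ofReal_le_ofReal
          rw [hident _ l hm0 hl, hident _ l hn0 hl]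
          have hmc : ((m:ℝ)) ≤ (n:ℝ) := by exact_mod_cast hmn
          have hle : ((n:ℝ)+1)⁻¹ ≤ ((m:ℝ)+1)⁻¹ := by
            apply inv_anti₀ (by positivity)
            linarith
          apply inv_anti₀ (by positivity)
          exact pow_le_pow_left₀ (by positivity) (by linarith) _
        have htt : (0:ℝ) ≤ t ^ (-2:ℝ) := Real.rpow_nonneg ht.le _
        have htinv : t ^ (-2:ℝ) = ((t:ℝ)^2)⁻¹ := by
          rw [show (-2:ℝ) = -((2:ℕ):ℝ) by norm_num, Real.rpow_neg ht.le, Real.rpow_natCast]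
        calc ENNReal.ofReal (t ^ (-2:ℝ)) *
              ∫⁻ l, ENNReal.ofReal (t ^ 2 / (t ^ 2 + l ^ (2*(k:ℝ)))) ∂μ
            = ∫⁻ l, ENNReal.ofReal (t ^ (-2:ℝ) * (t ^ 2 / (t ^ 2 + l ^ (2*(k:ℝ))))) ∂μ := by
              rw [← lintegral_const_mul' _ _ ENNReal.ofReal_ne_top]
              exact lintegral_congr fun l => (ENNReal.ofReal_mul htt).symm
          _ ≤ ∫⁻ l, ⨆ n : ℕ, ENNReal.ofReal
                ((((n:ℝ)+1)⁻¹ ^ (-(2*(k:ℝ)))) * ((((n:ℝ)+1)⁻¹/(((n:ℝ)+1)⁻¹+l)) ^ (2*(k:ℝ)))) ∂μ := by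
              refine lintegral_mono_ae ?_
              filter_upwards [hae] with l hl
              have hlq : l ^ (2*(k:ℝ)) = l ^ (2*k:ℕ) := by rw [hcast, Real.rpow_natCast]
              have hval : t ^ (-2:ℝ) * (t ^ 2 / (t ^ 2 + l ^ (2*(k:ℝ))))
                  = ((t^2 + l^(2*k:ℕ)))⁻¹ := by
                rw [htinv, hlq]
                have : (0:ℝ) < t^2 + l^(2*k:ℕ) := by positivity
                field_simp
              obtain ⟨n, hn⟩ : ∃ n : ℕ, ((((n:ℝ)+1)⁻¹ + l)^(2*k:ℕ)) < t^2 + l^(2*k:ℕ) := by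
                have h1 : Tendsto (fun n:ℕ => ((n:ℝ)+1)⁻¹) atTop (nhds 0) := by
                  apply Filter.Tendsto.inv_tendsto_atTop
                  exact tendsto_atTop_add_const_right _ _ tendsto_natCast_atTop_atTop
                have h2 : Tendsto (fun n:ℕ => (((n:ℝ)+1)⁻¹ + l)^(2*k:ℕ)) atTop
                    (nhds ((0+l)^(2*k:ℕ))) := (h1.add_const l).pow _
                have h3 : ((0:ℝ)+l)^(2*k:ℕ) < t^2 + l^(2*k:ℕ) := by
                  rw [zero_add]
                  have : (0:ℝ) < t^2 := by positivity
                  linarith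
                exact (h2.eventually_lt_const h3).exists
              refine le_trans ?_ (le_iSup _ n)
              rw [hval, hident _ l (by positivity) hl]
              apply ENNReal.ofReal_le_ofReal
              exact inv_anti₀ (by positivity) hn.le
          _ = ⨆ n : ℕ, ∫⁻ l, ENNReal.ofReal
                ((((n:ℝ)+1)⁻¹ ^ (-(2*(k:ℝ)))) * ((((n:ℝ)+1)⁻¹/(((n:ℝ)+1)⁻¹+l)) ^ (2*(k:ℝ)))) ∂μ :=
              lintegral_iSup' hmeas hmono
          _ ≤ ⨆ α ∈ Ioi (0:ℝ), ENNReal.ofReal (α ^ (-(2*(k:ℝ))) * ‖xdag - xαk α‖ ^ 2) := by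
              refine iSup_le fun n => ?_
              have hp : (0:ℝ) < ((n:ℝ)+1)⁻¹ := by positivity
              refine le_iSup₂_of_le (((n:ℝ)+1)⁻¹) (mem_Ioi.mpr hp) ?_
              rw [ENNReal.ofReal_mul (Real.rpow_nonneg hp.le _), hrep _ hp,
                ← lintegral_const_mul' _ _ ENNReal.ofReal_ne_top]
              exact le_of_eq (lintegral_congr fun l =>
                ENNReal.ofReal_mul (Real.rpow_nonneg hp.le _))
  · -- upper bound
    refine iSup₂_le fun α hα => ?_
    rw [mem_Ioi] at hα
    rw [ENNReal.ofReal_mul (Real.rpow_nonneg hα.le _), hrep α hα]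
    refine le_iSup₂_of_le (α ^ (k:ℕ)) (mem_Ioi.mpr (pow_pos hα k)) ?_
    have he : ((α ^ (k:ℕ)) : ℝ) ^ (-(2*ν/(k:ℝ))) = α ^ (-(2*ν)) := by
      rw [← Real.rpow_natCast α k, ← Real.rpow_mul hα.le]
      congr 1
      field_simp
    rw [he]
    refine mul_le_mul_right ?_ _
    refine lintegral_mono_ae ?_
    filter_upwards [hae] with l hl
    apply ENNReal.ofReal_le_ofReal
    rw [hcast, Real.rpow_natCast, Real.rpow_natCast]
    rw [div_pow]
    have h1 : (α ^ k) ^ 2 = α ^ (2*k) := by rw [← pow_mul, mul_comm]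
    rw [h1]
    have hαl : 0 < α + l := by linarith
    have hsum : α^(2*k) + l^(2*k) ≤ (α+l)^(2*k) := pow_add_pow_le hα.le hl (by omega)
    have hpos : 0 < α^(2*k) + l^(2*k) := by positivity
    gcongr
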